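/- The stationary states of ε-PQM3 (in-flux min{δ, (Λ−λ)/ε} equals out-flux min{δ + λ/ε, σ}) are: λ = Λ − εσ if δ > σ; λ = 0 if δ < σ; any λ ∈ [0, Λ−εσ] if δ = σ, provided εσ ≤ Λ. -/

import Mathlib

/-- Stationary states of ε-PQM3. -/
theorem stmt_14 (δ σ Λ ε : ℝ) (hδ : 0 ≤ δ) (hσ : 0 ≤ σ) (hΛ : 0 < Λ) (hε : 0 < ε)
    (hcond : ε * σ ≤ Λ) :
    ∀ lam ∈ Set.Icc (0 : ℝ) Λ,
      (σ < δ → (min δ ((Λ - lam) / ε) = min (δ + lam / ε) σ ↔ lam = Λ - ε * σ)) ∧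
      (δ < σ → (min δ ((Λ - lam) / ε) = min (δ + lam / ε) σ ↔ lam = 0)) ∧
      (δ = σ → (min δ ((Λ - lam) / ε) = min (δ + lam / ε) σ ↔
        lam ∈ Set.Icc 0 (Λ - ε * σ))) := by
  rintro lam ⟨h0, h1⟩
  have hl : 0 ≤ lam / ε := div_nonneg h0 hε.le
  refine ⟨?_, ?_, ?_⟩
  · intro hσδ
    have hR : min (δ + lam / ε) σ = σ := min_eq_right (by linarith)
    rw [hR]
    constructor
    · intro h
      rcases min_cases δ ((Λ - lam) / ε) with ⟨he, _⟩ | ⟨he, _⟩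
      · rw [he] at h; linarith
      · rw [he] at h
        field_simp at h
        linarith
    · intro h
      subst h
      have : (Λ - (Λ - ε * σ)) / ε = σ := by field_simp; ring
      rw [this]
      exact min_eq_right hσδ.le
  · intro hδσ
    constructor
    · intro h
      by_contra hne
      have hlam : 0 < lam := lt_of_le_of_ne h0 (Ne.symm hne)
      have hlε : 0 < lam / ε := div_pos hlam hε
      have hL : min δ ((Λ - lam) / ε) ≤ δ := min_le_left _ _
      have : δ < min (δ + lam / ε) σ := lt_min (by linarith) hδσ
      linarith
    · intro h
      subst h
      have h1 : δ ≤ Λ / ε := by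
        rw [le_div_iff₀ hε]; nlinarith
      have h2 : min δ ((Λ - (0:ℝ)) / ε) = δ := by
        rw [sub_zero]; exact min_eq_left h1
      have h3 : min (δ + (0:ℝ) / ε) σ = δ := by
        rw [zero_div, add_zero]; exact min_eq_left hδσ.le
      rw [h2, h3]
  · intro hδσ
    subst hδσ
    have hR : min (δ + lam / ε) δ = δ := min_eq_right (by linarith)
    rw [hR]
    constructor
    · intro h
      have hle : δ ≤ (Λ - lam) / ε := by
        rcases min_cases δ ((Λ - lam) / ε) with ⟨_, h'⟩ | ⟨he, _⟩
        · exact h'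
        · rw [he] at h; rw [h]
      rw [le_div_iff₀ hε] at hle
      exact ⟨h0, by nlinarith⟩
    · rintro ⟨_, h2⟩
      have : δ ≤ (Λ - lam) / ε := by
        rw [le_div_iff₀ hε]; nlinarith
      exact min_eq_left this
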